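/- arXiv:1210.6298 — 8 statements merged into one kernel-verified Lean document; each statement's English description precedes it below -/
import Mathlib

section
/- Let F be a subset of the total functions on ℕ, and let F' : T_1^k → T_{m+1} be an F-substitutional mapping (m ≥ 1). Then there exists an F-substitutional mapping G : T_1^{k+1} → T_m such that F'(f_1,...,f_k)(s,t_1,...,t_m) = G(f_1,...,f_k,const_s)(t_1,...,t_m) for all f_1,...,f_k ∈ T_1 and all s,t_1,...,t_m ∈ ℕ. -/
/-- A `k`-ary operator: a map from `k`-tuples of unary total functions on ℕ to
unary total functions on ℕ. -/
def Op (k : ℕ) := (Fin k → ℕ → ℕ) → ℕ → ℕ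

/-- A class of operators, one set for each arity. -/
def OpClass := ∀ k : ℕ, Set (Op k)

/-- A class of operators is appropriate if it contains all projection operators,
contains the composition operator, is closed under composition of operators,
and is closed under diagonalization. -/
structure Appropriate (O : OpClass) : Prop where
  proj : ∀ (k : ℕ) (i : Fin k), (fun fs => fs i) ∈ O k
  comp : (fun (fs : Fin 2 → ℕ → ℕ) n => fs 0 (fs 1 n)) ∈ O 2
  subst : ∀ (k l : ℕ) (F : Op k) (G : Fin k → Op l),
      F ∈ O k → (∀ i, G i ∈ O l) →
      (fun gs => F (fun i => G i gs)) ∈ O l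
  diag : ∀ (k : ℕ) (F : Op (k + 1)), F ∈ O (k + 1) →
      (fun fs n => F (Fin.snoc fs (fun _ => n)) n) ∈ O k

/-- A function `f : ℕ^k → ℕ` is `O`-representable if the pointwise-lifted
operator `f̊` belongs to `O`. -/
def Representable (O : OpClass) (k : ℕ) (f : (Fin k → ℕ) → ℕ) : Prop :=
  (fun fs n => f (fun i => fs i n)) ∈ O k

/-- The `F`-substitutional mappings of `T_1^k` into `T_m`. -/
inductive Subst (F : ∀ r : ℕ, Set ((Fin r → ℕ) → ℕ)) (k : ℕ) :
    ∀ m : ℕ, ((Fin k → ℕ → ℕ) → (Fin m → ℕ) → ℕ) → Prop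
  | proj (m : ℕ) (j : Fin m) : Subst F k m (fun _ v => v j)
  | arg (m : ℕ) (i : Fin k) (F0 : (Fin k → ℕ → ℕ) → (Fin m → ℕ) → ℕ) :
      Subst F k m F0 → Subst F k m (fun fs v => fs i (F0 fs v))
  | app (m r : ℕ) (f : (Fin r → ℕ) → ℕ) (hf : f ∈ F r)
      (Fs : Fin r → (Fin k → ℕ → ℕ) → (Fin m → ℕ) → ℕ) :
      (∀ j, Subst F k m (Fs j)) →
      Subst F k m (fun fs v => f (fun j => Fs j fs v))

lemma subst_aux (F : ∀ r : ℕ, Set ((Fin r → ℕ) → ℕ)) (k : ℕ) :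
    ∀ {n : ℕ} {F0 : (Fin k → ℕ → ℕ) → (Fin n → ℕ) → ℕ}, Subst F k n F0 →
    ∀ m : ℕ, 1 ≤ m → ∀ e : n = m + 1,
    ∃ G : (Fin (k + 1) → ℕ → ℕ) → (Fin m → ℕ) → ℕ,
      Subst F (k + 1) m G ∧
      ∀ (fs : Fin k → ℕ → ℕ) (v : Fin n → ℕ),
        F0 fs v = G (Fin.snoc fs (fun _ => v (Fin.cast e.symm 0)))
          (fun j => v (Fin.cast e.symm j.succ)) := by
  intro n F0 h
  induction h with
  | proj j =>
    intro m hm e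
    subst e
    rcases Fin.eq_zero_or_eq_succ j with h | ⟨i, rfl⟩
    · subst h
      refine ⟨fun fs v => fs (Fin.last k) (v ⟨0, hm⟩),
        Subst.arg m (Fin.last k) _ (Subst.proj m ⟨0, hm⟩), ?_⟩
      intro fs v
      simp
    · exact ⟨fun _ v => v i, Subst.proj m i, fun fs v => rfl⟩
  | arg i F0 h ih =>
    intro m hm e
    obtain ⟨G, hG, hEq⟩ := ih m hm e
    refine ⟨fun fs v => fs i.castSucc (G fs v), Subst.arg m i.castSucc _ hG, ?_⟩
    intro fs v
    simp [hEq]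
  | app r f hf Fs h ih =>
    intro m hm e
    choose G hG hEq using fun j => ih j m hm e
    refine ⟨fun fs v => f (fun j => G j fs v), Subst.app m r f hf G hG, ?_⟩
    intro fs v
    simp [hEq]

/-- If `F' : T_1^k → T_{m+1}` is `F`-substitutional, then there is an
`F`-substitutional mapping `G : T_1^{k+1} → T_m` with
`F'(f₁,…,f_k)(s,t₁,…,t_m) = G(f₁,…,f_k,const_s)(t₁,…,t_m)`. -/
theorem exists_subst_snoc_const (F : ∀ r : ℕ, Set ((Fin r → ℕ) → ℕ))
    (k m : ℕ) (hm : 1 ≤ m)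
    (F' : (Fin k → ℕ → ℕ) → (Fin (m + 1) → ℕ) → ℕ)
    (hF' : Subst F k (m + 1) F') :
    ∃ G : (Fin (k + 1) → ℕ → ℕ) → (Fin m → ℕ) → ℕ,
      Subst F (k + 1) m G ∧
      ∀ (fs : Fin k → ℕ → ℕ) (v : Fin (m + 1) → ℕ),
        F' fs v = G (Fin.snoc fs (fun _ => v 0)) (fun j => v j.succ) := by
  obtain ⟨G, hG, hEq⟩ := subst_aux F k hF' m hm rfl
  exact ⟨G, hG, fun fs v => hEq fs v⟩
end

section
/- Let F be a subset of the total functions on ℕ and F' : T_1^k → T_{m+1} a mapping. Then F' is F-substitutional if and only if there exists an F-substitutional operator G : T_1^{k+m} → T_1 such that F'(f_1,...,f_k)(s_1,...,s_m,t) = G(f_1,...,f_k,const_{s_1},...,const_{s_m})(t) for all f_1,...,f_k ∈ T_1 and all s_1,...,s_m,t ∈ ℕ. -/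
/-- The `F`-substitutional operators (mappings of `T_1^k` into `T_1`). -/
inductive SubstOp (F : ∀ r : ℕ, Set ((Fin r → ℕ) → ℕ)) (k : ℕ) : Op k → Prop
  | id : SubstOp F k (fun _ n => n)
  | arg (i : Fin k) (F0 : Op k) : SubstOp F k F0 →
      SubstOp F k (fun fs n => fs i (F0 fs n))
  | app (r : ℕ) (f : (Fin r → ℕ) → ℕ) (hf : f ∈ F r) (Fs : Fin r → Op k) :
      (∀ j, SubstOp F k (Fs j)) →
      SubstOp F k (fun fs n => f (fun j => Fs j fs n))

private lemma substOp_congr {F : ∀ r : ℕ, Set ((Fin r → ℕ) → ℕ)} {k : ℕ}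
    {G1 G2 : Op k} (h : G1 = G2) (h2 : SubstOp F k G2) : SubstOp F k G1 := h ▸ h2

private lemma subst_congr {F : ∀ r : ℕ, Set ((Fin r → ℕ) → ℕ)} {k m : ℕ}
    {G1 G2 : (Fin k → ℕ → ℕ) → (Fin m → ℕ) → ℕ} (h : G1 = G2)
    (h2 : Subst F k m G2) : Subst F k m G1 := h ▸ h2

private lemma substOp_diag {F : ∀ r : ℕ, Set ((Fin r → ℕ) → ℕ)} {q : ℕ}
    {G : Op (q + 1)} (h : SubstOp F (q + 1) G) :
    SubstOp F q (fun fs n => G (Fin.snoc fs (fun _ => n)) n) := by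
  induction h with
  | id => exact SubstOp.id
  | arg i F0 h ih =>
    cases i using Fin.lastCases with
    | last =>
      refine substOp_congr ?_ (SubstOp.id (F := F) (k := q))
      funext fs n
      simp [Fin.snoc_last]
    | cast i =>
      refine substOp_congr ?_ (SubstOp.arg i _ ih)
      funext fs n
      simp [Fin.snoc_castSucc]
  | app r f hf Fs h ih =>
    exact SubstOp.app r f hf _ ih

private lemma substToOp {F : ∀ r : ℕ, Set ((Fin r → ℕ) → ℕ)} {k m : ℕ}
    {F'' : (Fin k → ℕ → ℕ) → (Fin m → ℕ) → ℕ} (h : Subst F k m F'') :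
    ∃ G : Op (k + m), SubstOp F (k + m) G ∧
      ∀ fs v t, F'' fs v = G (Fin.append fs (fun j _ => v j)) t := by
  induction h with
  | proj j =>
    refine ⟨fun fs n => fs (Fin.natAdd k j) n, SubstOp.arg _ _ SubstOp.id, ?_⟩
    intro fs v t
    simp [Fin.append_right]
  | arg i F0 h ih =>
    obtain ⟨G0, hG0, hEq⟩ := ih
    refine ⟨fun fs n => fs (Fin.castAdd m i) (G0 fs n), SubstOp.arg _ _ hG0, ?_⟩
    intro fs v t
    simp only [Fin.append_left, ← hEq]
  | app r f hf Fs h ih =>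
    choose Gs hGs hEq using ih
    refine ⟨fun fs n => f (fun j => Gs j fs n), SubstOp.app r f hf Gs hGs, ?_⟩
    intro fs v t
    simp only [← hEq]

private lemma opToSubst {F : ∀ r : ℕ, Set ((Fin r → ℕ) → ℕ)} {k m : ℕ}
    {G : Op (k + m)} (h : SubstOp F (k + m) G) :
    Subst F k (m + 1) (fun fs v =>
      G (Fin.append fs (fun j _ => v j.castSucc)) (v (Fin.last m))) := by
  induction h with
  | id => exact Subst.proj _ (Fin.last m)
  | arg i F0 h ih =>
    cases i using Fin.addCases with
    | left i =>
      refine subst_congr ?_ (Subst.arg _ i _ ih)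
      funext fs v
      simp [Fin.append_left]
    | right j =>
      refine subst_congr ?_ (Subst.proj (m + 1) j.castSucc)
      funext fs v
      simp [Fin.append_right]
  | app r f hf Fs h ih =>
    exact Subst.app _ r f hf _ ih

/-- `F' : T_1^k → T_{m+1}` is `F`-substitutional iff there exists an
`F`-substitutional operator `G : T_1^{k+m} → T_1` such that
`F'(f₁,…,f_k)(s₁,…,s_m,t) = G(f₁,…,f_k,const_{s₁},…,const_{s_m})(t)`. -/
theorem subst_iff_exists_substOp (F : ∀ r : ℕ, Set ((Fin r → ℕ) → ℕ))
    (k m : ℕ) (F' : (Fin k → ℕ → ℕ) → (Fin (m + 1) → ℕ) → ℕ) :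
    Subst F k (m + 1) F' ↔
      ∃ G : Op (k + m), SubstOp F (k + m) G ∧
        ∀ (fs : Fin k → ℕ → ℕ) (v : Fin (m + 1) → ℕ),
          F' fs v =
            G (Fin.append fs (fun (j : Fin m) (_ : ℕ) => v j.castSucc))
              (v (Fin.last m)) := by
  constructor
  · intro h
    obtain ⟨G', hG', hEq⟩ := substToOp h
    refine ⟨fun fs n => G' (Fin.snoc fs (fun _ => n)) n, substOp_diag hG', ?_⟩
    intro fs v
    rw [hEq fs v (v (Fin.last m))]
    congr 1
    have : (fun (j : Fin (m + 1)) (_ : ℕ) => v j) =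
        Fin.snoc (fun (j : Fin m) (_ : ℕ) => v j.castSucc)
          (fun _ => v (Fin.last m)) := by
      funext j
      cases j using Fin.lastCases with
      | last => simp
      | cast j => simp
    rw [this, Fin.append_snoc]
  · rintro ⟨G, hG, hEq⟩
    have hF : F' = fun fs v =>
        G (Fin.append fs (fun j _ => v j.castSucc)) (v (Fin.last m)) := by
      funext fs v
      exact hEq fs v
    rw [hF]
    exact opToSubst hG
end

section
/- Let O be an appropriate class of operators and let F be the class of all O-representable functions. Then every F-substitutional operator belongs to O. -/
/-- If `F` is the class of all `O`-representable functions, for an appropriate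
class `O`, then every `F`-substitutional operator belongs to `O`. -/
theorem substOp_representable_mem (O : OpClass) (hO : Appropriate O)
    (k : ℕ) (G : Op k)
    (hG : SubstOp (fun r => {f | Representable O r f}) k G) :
    G ∈ O k := by
  induction hG with
  | id =>
      have h := hO.diag k (fun fs => fs (Fin.last k)) (hO.proj (k + 1) (Fin.last k))
      simp at h; exact h
  | arg i F0 _ ih =>
      have h := hO.subst 2 k (fun fs n => fs 0 (fs 1 n))
        (fun j => if j = 0 then (fun fs => fs i) else F0)
        hO.comp
        (by
          intro j
          fin_cases j
          · simp; exact hO.proj k i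
          · simpa using ih)
      simp at h; exact h
  | app r f hf Fs _ ih =>
      exact hO.subst r k (fun gs n => f (fun j => gs j n)) Fs hf ih
end

section
/- Let F be any class of total functions on ℕ and G a k-ary F-substitutional operator. Then there exists a natural number v with the following property: for all f_1,...,f_k ∈ T_1 and all n ∈ ℕ there exists a finite set A ⊆ ℕ with at most v elements such that G(g_1,...,g_k)(n) = G(f_1,...,f_k)(n) whenever g_1,...,g_k ∈ T_1 agree with f_1,...,f_k respectively on all t ∈ A. -/
/-- Strong continuity of `F`-substitutional operators: there is a uniform
cardinality bound `v` such that for each input there is a set `A` of at most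
`v` points on which the value only depends. -/
theorem substOp_strong_continuity (F : ∀ r : ℕ, Set ((Fin r → ℕ) → ℕ))
    (k : ℕ) (G : Op k) (hG : SubstOp F k G) :
    ∃ v : ℕ, ∀ (fs : Fin k → ℕ → ℕ) (n : ℕ), ∃ A : Finset ℕ,
      A.card ≤ v ∧
      ∀ gs : Fin k → ℕ → ℕ,
        (∀ i, ∀ t ∈ A, gs i t = fs i t) → G gs n = G fs n := by
  induction hG with
  | id => exact ⟨0, fun fs n => ⟨∅, by simp⟩⟩
  | arg i F0 h ih =>
      obtain ⟨v, hv⟩ := ih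
      refine ⟨v + 1, fun fs n => ?_⟩
      obtain ⟨A, hA, hAg⟩ := hv fs n
      refine ⟨insert (F0 fs n) A, ?_, fun gs hgs => ?_⟩
      · exact (Finset.card_insert_le _ _).trans (by omega)
      · have h0 : F0 gs n = F0 fs n :=
          hAg gs fun i t ht => hgs i t (Finset.mem_insert_of_mem ht)
        show gs i (F0 gs n) = fs i (F0 fs n)
        rw [h0]
        exact hgs i _ (Finset.mem_insert_self _ _)
  | app r f hf Fs h ih =>
      choose v hv using ih
      refine ⟨∑ j, v j, fun fs n => ?_⟩
      choose A hA hAg using fun j => hv j fs n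
      refine ⟨Finset.univ.biUnion A, ?_, fun gs hgs => ?_⟩
      · exact (Finset.card_biUnion_le).trans (Finset.sum_le_sum fun j _ => hA j)
      · have : ∀ j, Fs j gs n = Fs j fs n := fun j =>
          hAg j gs fun i t ht => hgs i t (Finset.mem_biUnion.2 ⟨j, Finset.mem_univ _, ht⟩)
        simp only [this]
end

section
/- Let O be an appropriate class of operators. Suppose there exists an O-representable function C : ℕ² → ℕ with C(u,v) = 0 iff (u,v) = (0,0), and O-representable unary functions L, R such that the map s ↦ (L(s), R(s)) is surjective onto ℕ². If θ_0 and θ_1 are conditionally O-computable unary real functions, then the composition ξ ↦ θ_0(θ_1(ξ)) (with domain {ξ ∈ dom θ_1 : θ_1(ξ) ∈ dom θ_0}) is conditionally O-computable. -/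
/-- A triple `(f,g,h)` of total unary functions on ℕ names the real number `ξ`. -/
def Names (f g h : ℕ → ℕ) (ξ : ℝ) : Prop :=
  ∀ t : ℕ, |((f t : ℝ) - (g t : ℝ)) / ((h t : ℝ) + 1) - ξ| < 1 / ((t : ℝ) + 1)

/-- A `3N`-tuple of functions names the `N`-tuple of reals `ξ` componentwise. -/
def NamesTuple (N : ℕ) (fs : Fin (3 * N) → ℕ → ℕ) (ξ : Fin N → ℝ) : Prop :=
  ∀ i : Fin N,
    Names (fs ⟨3 * i.val, by have := i.isLt; omega⟩)
      (fs ⟨3 * i.val + 1, by have := i.isLt; omega⟩)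
      (fs ⟨3 * i.val + 2, by have := i.isLt; omega⟩) (ξ i)

/-- Uniform `O`-computability of an `N`-argument real function with domain `D`. -/
def UnifComp (O : OpClass) (N : ℕ) (D : Set (Fin N → ℝ))
    (θ : (Fin N → ℝ) → ℝ) : Prop :=
  ∃ F G H : Op (3 * N), F ∈ O (3 * N) ∧ G ∈ O (3 * N) ∧ H ∈ O (3 * N) ∧
    ∀ ξ ∈ D, ∀ fs, NamesTuple N fs ξ → Names (F fs) (G fs) (H fs) (θ ξ)

/-- Conditional `O`-computability of an `N`-argument real function with domain `D`. -/
def CondComp (O : OpClass) (N : ℕ) (D : Set (Fin N → ℝ))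
    (θ : (Fin N → ℝ) → ℝ) : Prop :=
  ∃ E : Op (3 * N), ∃ F G H : Op (3 * N + 1),
    E ∈ O (3 * N) ∧ F ∈ O (3 * N + 1) ∧ G ∈ O (3 * N + 1) ∧ H ∈ O (3 * N + 1) ∧
    ∀ ξ ∈ D, ∀ fs, NamesTuple N fs ξ →
      (∃ s : ℕ, E fs s = 0) ∧
      ∀ s : ℕ, E fs s = 0 →
        Names (F (Fin.snoc fs (fun _ => s))) (G (Fin.snoc fs (fun _ => s)))
          (H (Fin.snoc fs (fun _ => s))) (θ ξ)


section CondCompCompAux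

variable {O : OpClass}

private lemma subst_mem (hO : Appropriate O) {k l : ℕ} {F : Op k} {G : Fin k → Op l}
    (hF : F ∈ O k) (hG : ∀ i, G i ∈ O l) {H : Op l}
    (hH : ∀ gs, H gs = F (fun i => G i gs)) : H ∈ O l := by
  have e : H = fun gs => F (fun i => G i gs) := funext hH
  rw [e]; exact hO.subst k l F G hF hG

private lemma diag_mem (hO : Appropriate O) {k : ℕ} {F : Op (k + 1)} (hF : F ∈ O (k + 1))
    {H : Op k} (hH : ∀ fs, H fs = fun n => F (Fin.snoc fs (fun _ => n)) n) : H ∈ O k := by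
  have e : H = fun fs n => F (Fin.snoc fs (fun _ => n)) n := funext hH
  rw [e]; exact hO.diag k F hF

private lemma comp2_mem (hO : Appropriate O) {k : ℕ} {A B : Op k} (hA : A ∈ O k) (hB : B ∈ O k)
    {H : Op k} (hH : ∀ fs n, H fs n = A fs (B fs n)) : H ∈ O k := by
  refine subst_mem hO hO.comp (G := ![A, B]) ?_ ?_
  · intro i; fin_cases i
    · simpa using hA
    · simpa using hB
  · intro gs; funext n; rw [hH]; simp

end CondCompCompAux

/-- the "middle" transformation: keep the first three functions, replace the
fourth one by `L` composed with it. -/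
private def mid4 (L : ℕ → ℕ) (gs : Fin 4 → ℕ → ℕ) : Fin 4 → ℕ → ℕ :=
  Fin.snoc (fun j : Fin 3 => gs j.castSucc) (fun n => L (gs 3 n))

private def triple3 (F1 G1 H1 : Op 4) (gs : Fin 4 → ℕ → ℕ) : Fin 3 → ℕ → ℕ :=
  ![F1 gs, G1 gs, H1 gs]

private lemma mid4_snoc (L : ℕ → ℕ) (fs : Fin 3 → ℕ → ℕ) (s : ℕ) :
    mid4 L (Fin.snoc fs (fun _ => s)) = Fin.snoc fs (fun _ => L s) := by
  funext i
  refine Fin.lastCases ?_ (fun j => ?_) i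
  · show (fun n => L ((Fin.snoc fs (fun _ => s) : Fin 4 → ℕ → ℕ) 3 n)) = _
    rfl
  · simp [mid4]

/-- Substitution preserves conditional `O`-computability of unary real
functions, under the assumptions on `C`, `L`, `R`. -/
theorem condComp_comp (O : OpClass) (hO : Appropriate O)
    (C : (Fin 2 → ℕ) → ℕ) (hCrep : Representable O 2 C)
    (hC : ∀ u v : ℕ, C ![u, v] = 0 ↔ u = 0 ∧ v = 0)
    (L R : ℕ → ℕ)
    (hL : Representable O 1 (fun v => L (v 0)))
    (hR : Representable O 1 (fun v => R (v 0)))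
    (hLR : ∀ u v : ℕ, ∃ s : ℕ, L s = u ∧ R s = v)
    (D0 D1 : Set (Fin 1 → ℝ)) (θ0 θ1 : (Fin 1 → ℝ) → ℝ)
    (h0 : CondComp O 1 D0 θ0) (h1 : CondComp O 1 D1 θ1) :
    CondComp O 1 {ξ | ξ ∈ D1 ∧ ![θ1 ξ] ∈ D0} (fun ξ => θ0 ![θ1 ξ]) := by
  obtain ⟨E1, F1, G1, H1, hE1, hF1, hG1, hH1, hc1⟩ := h1
  obtain ⟨E0, F0, G0, H0, hE0, hF0, hG0, hH0, hc0⟩ := h0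
  have hLg : (fun gs : Fin 4 → ℕ → ℕ => fun n => L (gs 3 n)) ∈ O 4 :=
    subst_mem hO hL (G := fun _ : Fin 1 => fun gs => gs 3) (fun _ => hO.proj 4 3)
      (fun gs => rfl)
  have hRg : (fun gs : Fin 4 → ℕ → ℕ => fun n => R (gs 3 n)) ∈ O 4 :=
    subst_mem hO hR (G := fun _ : Fin 1 => fun gs => gs 3) (fun _ => hO.proj 4 3)
      (fun gs => rfl)
  have hmid : ∀ K : Op 4, K ∈ O 4 → (fun gs : Fin 4 → ℕ → ℕ => K (mid4 L gs)) ∈ O 4 := by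
    intro K hK
    refine subst_mem hO hK
      (G := ![fun gs : Fin 4 → ℕ → ℕ => gs 0, fun gs : Fin 4 → ℕ → ℕ => gs 1,
              fun gs : Fin 4 → ℕ → ℕ => gs 2,
              fun gs : Fin 4 → ℕ → ℕ => fun n => L (gs 3 n)]) ?_ ?_
    · intro i; fin_cases i
      · exact hO.proj 4 0
      · exact hO.proj 4 1
      · exact hO.proj 4 2
      · exact hLg
    · intro gs
      refine congrArg K ?_
      funext i
      fin_cases i <;> rfl
  have hE0t : (fun gs : Fin 4 → ℕ → ℕ => E0 (triple3 F1 G1 H1 (mid4 L gs))) ∈ O 4 := by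
    refine subst_mem hO hE0
      (G := ![fun gs => F1 (mid4 L gs), fun gs => G1 (mid4 L gs), fun gs => H1 (mid4 L gs)])
      ?_ ?_
    · intro i; fin_cases i
      · exact hmid F1 hF1
      · exact hmid G1 hG1
      · exact hmid H1 hH1
    · intro gs
      refine congrArg E0 ?_
      funext i
      fin_cases i <;> rfl
  have hE1f : (fun gs : Fin 4 → ℕ → ℕ => E1 (fun j : Fin 3 => gs j.castSucc)) ∈ O 4 :=
    subst_mem hO hE1 (G := fun j : Fin 3 => fun gs => gs j.castSucc)
      (fun j => hO.proj 4 j.castSucc) (fun gs => rfl)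
  have hc1op : (fun gs : Fin 4 → ℕ → ℕ => fun n =>
      E1 (fun j : Fin 3 => gs j.castSucc) (L (gs 3 n))) ∈ O 4 :=
    comp2_mem hO hE1f hLg (fun gs n => rfl)
  have hc2op : (fun gs : Fin 4 → ℕ → ℕ => fun n =>
      E0 (triple3 F1 G1 H1 (mid4 L gs)) (R (gs 3 n))) ∈ O 4 :=
    comp2_mem hO hE0t hRg (fun gs n => rfl)
  have hEhat : (fun gs : Fin 4 → ℕ → ℕ => fun n =>
      C ![E1 (fun j : Fin 3 => gs j.castSucc) (L (gs 3 n)),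
          E0 (triple3 F1 G1 H1 (mid4 L gs)) (R (gs 3 n))]) ∈ O 4 := by
    refine subst_mem hO hCrep
      (G := ![fun gs n => E1 (fun j : Fin 3 => gs j.castSucc) (L (gs 3 n)),
              fun gs n => E0 (triple3 F1 G1 H1 (mid4 L gs)) (R (gs 3 n))]) ?_ ?_
    · intro i; fin_cases i
      · exact hc1op
      · exact hc2op
    · intro gs
      funext n
      refine congrArg C ?_
      funext i
      fin_cases i <;> rfl
  have front_snoc : ∀ (fs : Fin 3 → ℕ → ℕ) (c : ℕ → ℕ),
      (fun j : Fin 3 => (Fin.snoc fs c : Fin 4 → ℕ → ℕ) j.castSucc) = fs :=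
    fun fs c => funext fun j => by simp
  have hEop : (fun (fs : Fin 3 → ℕ → ℕ) (n : ℕ) =>
      C ![E1 fs (L n),
          E0 (triple3 F1 G1 H1 (Fin.snoc fs (fun _ => L n))) (R n)]) ∈ O 3 := by
    refine diag_mem hO hEhat ?_
    intro fs
    funext n
    rw [front_snoc, mid4_snoc]
    rfl
  have hmem4 : ∀ K : Op 4, K ∈ O 4 →
      (fun gs : Fin 4 → ℕ → ℕ =>
        K (Fin.snoc (triple3 F1 G1 H1 (mid4 L gs)) (fun n => R (gs 3 n)))) ∈ O 4 := by
    intro K hK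
    refine subst_mem hO hK
      (G := ![fun gs => F1 (mid4 L gs), fun gs => G1 (mid4 L gs), fun gs => H1 (mid4 L gs),
              fun gs n => R (gs 3 n)]) ?_ ?_
    · intro i; fin_cases i
      · exact hmid F1 hF1
      · exact hmid G1 hG1
      · exact hmid H1 hH1
      · exact hRg
    · intro gs
      refine congrArg K ?_
      funext i
      fin_cases i <;> rfl
  refine ⟨fun fs n =>
      C ![E1 fs (L n), E0 (triple3 F1 G1 H1 (Fin.snoc fs (fun _ => L n))) (R n)],
    fun gs => F0 (Fin.snoc (triple3 F1 G1 H1 (mid4 L gs)) (fun n => R (gs 3 n))),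
    fun gs => G0 (Fin.snoc (triple3 F1 G1 H1 (mid4 L gs)) (fun n => R (gs 3 n))),
    fun gs => H0 (Fin.snoc (triple3 F1 G1 H1 (mid4 L gs)) (fun n => R (gs 3 n))),
    hEop, hmem4 F0 hF0, hmem4 G0 hG0, hmem4 H0 hH0, ?_⟩
  intro ξ hξ fs hfs
  obtain ⟨hξ1, hξ0⟩ := hξ
  obtain ⟨⟨s1, hs1⟩, hall1⟩ := hc1 ξ hξ1 fs hfs
  have trN : ∀ m, E1 fs m = 0 →
      NamesTuple 1 (triple3 F1 G1 H1 (Fin.snoc fs (fun _ => m))) ![θ1 ξ] := by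
    intro m hm i
    have h := hall1 m hm
    fin_cases i
    exact h
  constructor
  · obtain ⟨⟨s0, hs0⟩, -⟩ := hc0 ![θ1 ξ] hξ0 _ (trN s1 hs1)
    obtain ⟨s, hsL, hsR⟩ := hLR s1 s0
    refine ⟨s, ?_⟩
    show C ![E1 fs (L s), E0 (triple3 F1 G1 H1 (Fin.snoc fs (fun _ => L s))) (R s)] = 0
    rw [hsL, hsR, hs1, hs0]
    exact (hC 0 0).mpr ⟨rfl, rfl⟩
  · intro s hs
    have hs' : C ![E1 fs (L s),
        E0 (triple3 F1 G1 H1 (Fin.snoc fs (fun _ => L s))) (R s)] = 0 := hs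
    obtain ⟨h1z, h0z⟩ := (hC _ _).mp hs'
    have hn := (hc0 ![θ1 ξ] hξ0 _ (trN (L s) h1z)).2 (R s) h0z
    have e1 : mid4 L (Fin.snoc fs (fun _ => s)) = Fin.snoc fs (fun _ => L s) :=
      mid4_snoc L fs s
    have e2 : (fun n => R ((Fin.snoc fs (fun _ => s) : Fin 4 → ℕ → ℕ) 3 n))
        = (fun _ : ℕ => R s) := rfl
    show Names
      (F0 (Fin.snoc (triple3 F1 G1 H1 (mid4 L (Fin.snoc fs (fun _ => s))))
        (fun n => R ((Fin.snoc fs (fun _ => s) : Fin 4 → ℕ → ℕ) 3 n))))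
      (G0 (Fin.snoc (triple3 F1 G1 H1 (mid4 L (Fin.snoc fs (fun _ => s))))
        (fun n => R ((Fin.snoc fs (fun _ => s) : Fin 4 → ℕ → ℕ) 3 n))))
      (H0 (Fin.snoc (triple3 F1 G1 H1 (mid4 L (Fin.snoc fs (fun _ => s))))
        (fun n => R ((Fin.snoc fs (fun _ => s) : Fin 4 → ℕ → ℕ) 3 n))))
      (θ0 ![θ1 ξ])
    rw [e1, e2]
    exact hn
end

section
/- Let O be an appropriate class of continuous operators such that all constant unary functions and all functions μ_{k,c} (where μ_{k,c}(x,y) = c if x = k and y otherwise) are O-representable. Then every conditionally O-computable real function θ : D → ℝ, D ⊆ ℝ, is locally uniformly O-computable: every point of D has a neighbourhood U such that the restriction of θ to D ∩ U is uniformly O-computable. -/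
/-- Continuity of a `k`-ary operator. -/
def OpContinuous {k : ℕ} (G : Op k) : Prop :=
  ∀ (fs : Fin k → ℕ → ℕ) (n : ℕ), ∃ u : ℕ, ∀ gs : Fin k → ℕ → ℕ,
    (∀ i, ∀ t ≤ u, gs i t = fs i t) → G gs n = G fs n

/-- Patching operator: replace values at arguments `≤ u` by those of `c`. -/
def patchOp (c : ℕ → ℕ) : ℕ → Op 1
  | 0 => fun fs n => if n = 0 then c 0 else fs 0 n
  | (m+1) => fun fs n => if n = m + 1 then c (m+1) else patchOp c m fs n

lemma patchOp_apply (c : ℕ → ℕ) (u : ℕ) (fs : Fin 1 → ℕ → ℕ) (n : ℕ) :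
    patchOp c u fs n = if n ≤ u then c n else fs 0 n := by
  induction u with
  | zero =>
    rcases eq_or_ne n 0 with rfl | h
    · simp [patchOp]
    · simp [patchOp, Nat.le_zero, h]
  | succ m ih =>
    simp only [patchOp, ih]
    rcases eq_or_ne n (m+1) with rfl | h1
    · simp
    · have : (n ≤ m + 1) ↔ (n ≤ m) := by omega
      simp [h1, this]

lemma idOp_mem (O : OpClass) (hO : Appropriate O) :
    (fun (_ : Fin 1 → ℕ → ℕ) (n : ℕ) => n) ∈ O 1 := by
  have h := hO.diag 1 (fun fs => fs 1) (hO.proj 2 1)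
  have e : (fun (fs : Fin 1 → ℕ → ℕ) (n : ℕ) =>
      (Fin.snoc fs (fun _ => n) : Fin 2 → ℕ → ℕ) 1 n)
      = (fun (_ : Fin 1 → ℕ → ℕ) (n : ℕ) => n) := by
    funext fs n
    have : (1 : Fin 2) = Fin.last 1 := rfl
    rw [this, Fin.snoc_last]
  rwa [e] at h

lemma patchOp_mem (O : OpClass) (hO : Appropriate O)
    (hmu : ∀ k c : ℕ, Representable O 2 (fun v => if v 0 = k then c else v 1))
    (c : ℕ → ℕ) (u : ℕ) : patchOp c u ∈ O 1 := by
  induction u with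
  | zero =>
    have h := hO.subst 2 1 _ ![fun _ n => n, fun fs => fs 0] (hmu 0 (c 0)) ?_
    · have e : (fun (gs : Fin 1 → ℕ → ℕ) (n : ℕ) =>
          if (![fun _ n => n, fun fs => fs 0] : Fin 2 → Op 1) 0 gs n = 0 then c 0
          else (![fun _ n => n, fun fs => fs 0] : Fin 2 → Op 1) 1 gs n) = patchOp c 0 := by
        funext gs n
        simp [patchOp]
        rfl
      rwa [e] at h
    · intro i
      fin_cases i
      · exact idOp_mem O hO
      · exact hO.proj 1 0
  | succ m ih =>
    have h := hO.subst 2 1 _ ![fun _ n => n, patchOp c m] (hmu (m+1) (c (m+1))) ?_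
    · have e : (fun (gs : Fin 1 → ℕ → ℕ) (n : ℕ) =>
          if (![fun _ n => n, patchOp c m] : Fin 2 → Op 1) 0 gs n = m + 1 then c (m+1)
          else (![fun _ n => n, patchOp c m] : Fin 2 → Op 1) 1 gs n) = patchOp c (m+1) := by
        funext gs n
        simp [patchOp]
        rfl
      rwa [e] at h
    · intro i
      fin_cases i
      · exact idOp_mem O hO
      · exact ih

lemma constOp_mem (O : OpClass) (hO : Appropriate O)
    (hconst : ∀ c : ℕ, Representable O 1 (fun _ => c)) (s : ℕ) :
    (fun (_ : Fin 3 → ℕ → ℕ) (_ : ℕ) => s) ∈ O 3 := by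
  have h := hO.subst 1 3 _ (fun _ => fun fs => fs 0) (hconst s)
    (fun _ => hO.proj 3 0)
  exact h
/-- For an appropriate class `O` of continuous operators in which all unary
constant functions and all functions `μ_{k,c}` are representable, every
conditionally `O`-computable real function is locally uniformly
`O`-computable. -/
theorem condComp_locallyUnifComp (O : OpClass) (hO : Appropriate O)
    (hcont : ∀ (k : ℕ) (F : Op k), F ∈ O k → OpContinuous F)
    (hconst : ∀ c : ℕ, Representable O 1 (fun _ => c))
    (hmu : ∀ k c : ℕ, Representable O 2 (fun v => if v 0 = k then c else v 1))
    (D : Set (Fin 1 → ℝ)) (θ : (Fin 1 → ℝ) → ℝ)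
    (h : CondComp O 1 D θ) :
    ∀ ξ ∈ D, ∃ U ∈ nhds ξ, UnifComp O 1 (D ∩ U) θ := by
  obtain ⟨E, F, G, H, hE, hF, hG, hH, hcond⟩ := h
  intro ξ hξ
  set x := ξ 0 with hxdef
  -- a canonical name of ξ
  set a : ℕ → ℤ := fun t => round (x * ((t : ℝ) + 1)) with hadef
  set f₀ : ℕ → ℕ := fun t => (a t).toNat with hf₀def
  set g₀ : ℕ → ℕ := fun t => (-(a t)).toNat with hg₀def
  set h₀ : ℕ → ℕ := fun t => t with hh₀def
  set name₀ : Fin (3 * 1) → ℕ → ℕ :=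
    fun j => if j.val = 0 then f₀ else if j.val = 1 then g₀ else h₀ with hname₀def
  set A : ℕ → ℝ := fun t => ((f₀ t : ℝ) - (g₀ t : ℝ)) / ((h₀ t : ℝ) + 1) with hAdef
  have hA : ∀ t : ℕ, A t = (a t : ℝ) / ((t : ℝ) + 1) := by
    intro t
    have h1 : ((f₀ t : ℝ)) - (g₀ t : ℝ) = (a t : ℝ) := by
      have : ((a t).toNat : ℤ) - (((-(a t)).toNat) : ℤ) = a t := by omega
      simp only [hf₀def, hg₀def]
      exact_mod_cast this
    simp [hAdef, h1, hh₀def]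
  have hnames0 : ∀ t : ℕ, |A t - x| < 1 / ((t : ℝ) + 1) := by
    intro t
    have ht1 : (0 : ℝ) < (t : ℝ) + 1 := by positivity
    have h2 : |x * ((t : ℝ) + 1) - (a t : ℝ)| ≤ 1 / 2 := abs_sub_round _
    have h3 : A t - x = ((a t : ℝ) - x * ((t : ℝ) + 1)) / ((t : ℝ) + 1) := by
      rw [hA]; field_simp
    rw [h3, abs_div, abs_of_pos ht1, div_lt_div_iff₀ ht1 ht1]
    rw [abs_sub_comm] at h2
    nlinarith
  have hnames0' : NamesTuple 1 name₀ ξ := by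
    intro i
    have hi : i = 0 := Subsingleton.elim _ _
    subst hi
    exact hnames0
  obtain ⟨⟨s, hs⟩, -⟩ := hcond ξ hξ name₀ hnames0'
  obtain ⟨u, hu⟩ := hcont _ E hE name₀ s
  set δ : ℕ → ℝ := fun t => 1 / ((t : ℝ) + 1) - |A t - x| with hδdef
  have hδpos : ∀ t, 0 < δ t := fun t => sub_pos.2 (hnames0 t)
  have hne : (Finset.range (u + 1)).Nonempty := by simp
  set ε : ℝ := (Finset.range (u + 1)).inf' hne δ with hεdef
  have hεpos : 0 < ε := (Finset.lt_inf'_iff hne).mpr fun b _ => hδpos b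
  have hεle : ∀ t ≤ u, ε ≤ δ t := fun t ht =>
    Finset.inf'_le δ (Finset.mem_range.2 (by omega))
  refine ⟨{η : Fin 1 → ℝ | |η 0 - x| < ε}, ?_, ?_⟩
  · have hopen : IsOpen {η : Fin 1 → ℝ | |η 0 - x| < ε} := by
      have : {η : Fin 1 → ℝ | |η 0 - x| < ε}
          = (fun η : Fin 1 → ℝ => η 0) ⁻¹' Metric.ball x ε := by
        ext η; simp [Metric.mem_ball, Real.dist_eq]
      rw [this]
      exact Metric.isOpen_ball.preimage (continuous_apply 0)
    exact hopen.mem_nhds (by simp [hxdef, hεpos])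
  -- the uniform operators
  set GG : Fin (3 * 1 + 1) → Op (3 * 1) :=
    Fin.snoc (fun j gs => patchOp (name₀ j) u (fun _ => gs j)) (fun _ _ => s)
    with hGGdef
  have hGG : ∀ i, GG i ∈ O (3 * 1) := by
    intro i
    induction i using Fin.lastCases with
    | last =>
      have e : GG (Fin.last 3) = fun _ _ => s := by
        rw [hGGdef]; exact Fin.snoc_last _ _
      rw [e]
      exact constOp_mem O hO hconst s
    | cast j =>
      have e : GG (Fin.castSucc j) = fun gs => patchOp (name₀ j) u (fun _ => gs j) := by
        rw [hGGdef]; exact Fin.snoc_castSucc _ _ _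
      rw [e]
      exact hO.subst 1 3 _ (fun _ => fun gs => gs j)
        (patchOp_mem O hO hmu _ u) (fun _ => hO.proj 3 j)
  refine ⟨fun gs => F (fun i => GG i gs), fun gs => G (fun i => GG i gs),
    fun gs => H (fun i => GG i gs),
    hO.subst _ _ F GG hF hGG, hO.subst _ _ G GG hG hGG,
    hO.subst _ _ H GG hH hGG, ?_⟩
  intro η hη gs hgs
  set pfs : Fin (3 * 1) → ℕ → ℕ :=
    fun j t => if t ≤ u then name₀ j t else gs j t with hpfsdef
  have hGGapp : (fun i => GG i gs) = Fin.snoc pfs (fun _ => s) := by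
    funext i
    induction i using Fin.lastCases with
    | last => rw [hGGdef]; rw [Fin.snoc_last]; exact congrFun (Fin.snoc_last (α := fun _ => Op (3 * 1)) _ _) gs
    | cast j =>
      rw [hGGdef, Fin.snoc_castSucc]; refine (congrFun (Fin.snoc_castSucc (α := fun _ => Op (3 * 1)) _ _ _) gs).trans ?_; beta_reduce
      funext t
      rw [patchOp_apply]
  have hpfs : NamesTuple 1 pfs η := by
    intro i
    have hi : i = 0 := Subsingleton.elim _ _
    subst hi
    intro t
    by_cases htu : t ≤ u
    · have e1 : pfs ⟨3 * (0 : Fin 1).val, by omega⟩ t = f₀ t := if_pos htu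
      have e2 : pfs ⟨3 * (0 : Fin 1).val + 1, by omega⟩ t = g₀ t := if_pos htu
      have e3 : pfs ⟨3 * (0 : Fin 1).val + 2, by omega⟩ t = h₀ t := if_pos htu
      rw [e1, e2, e3]
      show |A t - η 0| < 1 / ((t : ℝ) + 1)
      have h2 : |η 0 - x| < ε := hη.2
      have h3 : ε ≤ δ t := hεle t htu
      have h4 : |A t - η 0| ≤ |A t - x| + |x - η 0| := abs_sub_le _ _ _
      have h5 : |x - η 0| = |η 0 - x| := abs_sub_comm _ _
      have h6 : δ t = 1 / ((t : ℝ) + 1) - |A t - x| := rfl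
      calc |A t - η 0| ≤ |A t - x| + |x - η 0| := h4
        _ = |A t - x| + |η 0 - x| := by rw [h5]
        _ < |A t - x| + ε := by linarith
        _ ≤ |A t - x| + δ t := by linarith
        _ = 1 / ((t : ℝ) + 1) := by rw [h6]; ring
    · have e1 : pfs ⟨3 * (0 : Fin 1).val, by omega⟩ t
          = gs ⟨3 * (0 : Fin 1).val, by omega⟩ t := if_neg htu
      have e2 : pfs ⟨3 * (0 : Fin 1).val + 1, by omega⟩ t
          = gs ⟨3 * (0 : Fin 1).val + 1, by omega⟩ t := if_neg htu
      have e3 : pfs ⟨3 * (0 : Fin 1).val + 2, by omega⟩ t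
          = gs ⟨3 * (0 : Fin 1).val + 2, by omega⟩ t := if_neg htu
      rw [e1, e2, e3]
      exact hgs 0 t
  have hagree : ∀ i, ∀ t ≤ u, pfs i t = name₀ i t := fun i t ht => if_pos ht
  have hEs : E pfs s = 0 := (hu pfs hagree).trans hs
  obtain ⟨-, hnameθ⟩ := hcond η hη.1 pfs hpfs
  have hfin := hnameθ s hEs
  show Names (F (fun i => GG i gs)) (G (fun i => GG i gs)) (H (fun i => GG i gs)) (θ η)
  rw [hGGapp]
  exact hfin
end

section
/- Let O be a decent class of operators. Then for any rational number a there exists an O-representable function lt_a : ℕ³ → ℕ such that for all x,y,z ∈ ℕ: lt_a(x,y,z) > 0 if and only if (x − y)/(z+1) < a (where the subtraction and division are over the rationals/reals). -/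
/-- A decent class of operators: appropriate, and successor, truncated
subtraction and `δ₁` are `O`-representable. -/
structure Decent (O : OpClass) : Prop where
  appropriate : Appropriate O
  succ : Representable O 1 (fun v => v 0 + 1)
  tsub : Representable O 2 (fun v => v 0 - v 1)
  delta1 : Representable O 3 (fun v => if v 0 = 0 then v 1 else v 2)

section AuxRep

variable {O : OpClass}

lemma rep_congr {k : ℕ} {f g : (Fin k → ℕ) → ℕ} (h : ∀ v, f v = g v)
    (hf : Representable O k f) : Representable O k g := by
  have hfg : f = g := funext h
  exact hfg ▸ hf

lemma rep_var (hA : Appropriate O) {k : ℕ} (i : Fin k) :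
    Representable O k (fun v => v i) :=
  hA.proj k i

lemma rep_comp' (hA : Appropriate O) {k l : ℕ} {f : (Fin k → ℕ) → ℕ}
    {g : Fin k → (Fin l → ℕ) → ℕ} (hf : Representable O k f)
    (hg : ∀ i, Representable O l (g i)) :
    Representable O l (fun v => f (fun i => g i v)) :=
  hA.subst k l _ _ hf hg

lemma rep_succ (hO : Decent O) {k : ℕ} {f : (Fin k → ℕ) → ℕ}
    (hf : Representable O k f) : Representable O k (fun v => f v + 1) := by
  have h := rep_comp' hO.appropriate (g := ![f]) hO.succ (fun i => by
    fin_cases i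
    · simpa using hf)
  exact rep_congr (fun v => by simp) h

lemma rep_sub (hO : Decent O) {k : ℕ} {f g : (Fin k → ℕ) → ℕ}
    (hf : Representable O k f) (hg : Representable O k g) :
    Representable O k (fun v => f v - g v) := by
  have h := rep_comp' hO.appropriate (g := ![f, g]) hO.tsub (fun i => by
    fin_cases i
    · simpa using hf
    · simpa using hg)
  exact rep_congr (fun v => by simp) h

lemma rep_ite (hO : Decent O) {k : ℕ} {f g h : (Fin k → ℕ) → ℕ}
    (hf : Representable O k f) (hg : Representable O k g) (hh : Representable O k h) :
    Representable O k (fun v => if f v = 0 then g v else h v) := by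
  have h' := rep_comp' hO.appropriate (g := ![f, g, h]) hO.delta1 (fun i => by
    fin_cases i
    · simpa using hf
    · simpa using hg
    · simpa using hh)
  exact rep_congr (fun v => by simp) h'

lemma rep_submul (hO : Decent O) {k : ℕ} (a : ℕ) {f g : (Fin k → ℕ) → ℕ}
    (hf : Representable O k f) (hg : Representable O k g) :
    Representable O k (fun v => f v - a * g v) := by
  induction a with
  | zero => exact rep_congr (fun v => by simp) hf
  | succ a ih =>
      refine rep_congr (fun v => ?_) (rep_sub hO ih hg)
      rw [Nat.sub_sub, ← Nat.succ_mul]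

/-- The Euclidean decision procedure: for fixed `P Q c` there is a representable
binary function positive iff `Q*u < P*v + c`. -/
lemma euclid (hO : Decent O) :
    ∀ N P Q c : ℕ, P + Q ≤ N → c ≤ 1 →
      ∃ f, Representable O 2 f ∧
        ∀ w : Fin 2 → ℕ, (0 < f w ↔ Q * w 0 < P * w 1 + c) := by
  intro N
  induction N with
  | zero =>
      intro P Q c hN hc
      obtain rfl : P = 0 := by omega
      obtain rfl : Q = 0 := by omega
      rcases Nat.eq_zero_or_pos c with rfl | hc1
      · exact ⟨fun w => w 0 - w 0,
          rep_sub hO (rep_var hO.appropriate 0) (rep_var hO.appropriate 0),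
          fun w => by simp⟩
      · exact ⟨fun w => (w 0 - w 0) + 1,
          rep_succ hO (rep_sub hO (rep_var hO.appropriate 0) (rep_var hO.appropriate 0)),
          fun w => by simp; omega⟩
  | succ n ih =>
      intro P Q c hN hc
      -- the main reduction step, usable when 1 ≤ Q ≤ P
      have step : ∀ P Q c : ℕ, c ≤ 1 → 0 < Q → Q ≤ P → P + Q ≤ n + 1 →
          ∃ f, Representable O 2 f ∧
            ∀ w : Fin 2 → ℕ, (0 < f w ↔ Q * w 0 < P * w 1 + c) := by
        intro P Q c hc hQ hQP hPQ
        have hrlt : P % Q < Q := Nat.mod_lt P hQ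
        obtain ⟨g, hgrep, hg⟩ := ih (P % Q) Q c (by omega) hc
        set a := P / Q with ha
        set r := P % Q with hr
        have hP : Q * a + r = P := Nat.div_add_mod P Q
        refine ⟨fun w => if (w 0 + 1) - a * w 1 = 0 then (w 0 - w 0) + 1
            else g ![w 0 - a * w 1, w 1], ?_, ?_⟩
        · refine rep_ite hO
            (rep_submul hO a (rep_succ hO (rep_var hO.appropriate 0)) (rep_var hO.appropriate 1))
            (rep_succ hO (rep_sub hO (rep_var hO.appropriate 0) (rep_var hO.appropriate 0)))
            ?_
          refine rep_congr (fun v => ?_)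
            (rep_comp' hO.appropriate
              (g := ![fun w => w 0 - a * w 1, fun w => w 1]) hgrep (fun i => by
                fin_cases i
                · simpa using rep_submul hO a (rep_var hO.appropriate 0) (rep_var hO.appropriate 1)
                · simpa using rep_var hO.appropriate 1))
          refine congrArg g ?_
          funext i
          fin_cases i <;> simp
        · intro w
          beta_reduce
          by_cases hcase : w 0 + 1 ≤ a * w 1
          · rw [if_pos (by omega)]
            have htrue : Q * w 0 < P * w 1 + c := by
              have h1 : Q * (w 0 + 1) ≤ Q * (a * w 1) := Nat.mul_le_mul_left Q hcase
              have h2 : (Q * a) * w 1 ≤ P * w 1 := Nat.mul_le_mul_right (w 1) (by omega)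
              nlinarith
            simp [htrue]
          · rw [if_neg (by omega)]
            rw [hg ![w 0 - a * w 1, w 1]]
            simp only [Matrix.cons_val_zero, Matrix.cons_val_one, Matrix.head_cons]
            obtain ⟨X, hX⟩ : ∃ X, w 0 = a * w 1 + X := ⟨w 0 - a * w 1, by omega⟩
            rw [hX, Nat.add_sub_cancel_left, ← hP]
            constructor <;> intro hh <;> nlinarith [hh]
      rcases Nat.eq_zero_or_pos Q with rfl | hQ
      · rcases Nat.eq_zero_or_pos c with rfl | hc1
        · rcases Nat.eq_zero_or_pos P with rfl | hP
          · exact ⟨fun w => w 0 - w 0,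
              rep_sub hO (rep_var hO.appropriate 0) (rep_var hO.appropriate 0),
              fun w => by simp⟩
          · refine ⟨fun w => w 1, rep_var hO.appropriate 1, fun w => ?_⟩
            rcases Nat.eq_zero_or_pos (w 1) with h | h
            · simp [h]
            · simp [h, Nat.mul_pos hP h]
        · obtain rfl : c = 1 := by omega
          exact ⟨fun w => (w 0 - w 0) + 1,
            rep_succ hO (rep_sub hO (rep_var hO.appropriate 0) (rep_var hO.appropriate 0)),
            fun w => by simp⟩
      · rcases le_or_gt Q P with hQP | hPQlt
        · exact step P Q c hc hQ hQP hN
        · rcases Nat.eq_zero_or_pos P with rfl | hP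
          · rcases Nat.eq_zero_or_pos c with rfl | hc1
            · exact ⟨fun w => w 0 - w 0,
                rep_sub hO (rep_var hO.appropriate 0) (rep_var hO.appropriate 0),
                fun w => by simp⟩
            · obtain rfl : c = 1 := by omega
              refine ⟨fun w => ((w 0 - w 0) + 1) - w 0,
                rep_sub hO (rep_succ hO (rep_sub hO (rep_var hO.appropriate 0)
                  (rep_var hO.appropriate 0))) (rep_var hO.appropriate 0), fun w => ?_⟩
              beta_reduce
              rcases Nat.eq_zero_or_pos (w 0) with h | h
              · simp [h]
              · have h2 : 0 < Q * w 0 := Nat.mul_pos hQ h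
                constructor
                · intro hh; omega
                · intro hh; omega
          · -- 0 < P < Q : swap
            obtain ⟨f₀, h0rep, h0⟩ := step Q P (1 - c) (by omega) hP (le_of_lt hPQlt) (by omega)
            refine ⟨fun w => if f₀ ![w 1, w 0] = 0 then (w 0 - w 0) + 1 else w 0 - w 0,
              ?_, ?_⟩
            · refine rep_ite hO ?_
                (rep_succ hO (rep_sub hO (rep_var hO.appropriate 0) (rep_var hO.appropriate 0)))
                (rep_sub hO (rep_var hO.appropriate 0) (rep_var hO.appropriate 0))
              refine rep_congr (fun v => ?_)
                (rep_comp' hO.appropriate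
                  (g := ![fun w => w 1, fun w => w 0]) h0rep (fun i => by
                    fin_cases i
                    · simpa using rep_var hO.appropriate 1
                    · simpa using rep_var hO.appropriate 0))
              refine congrArg f₀ ?_
              funext i
              fin_cases i <;> simp
            · intro w
              beta_reduce
              have hsw := h0 ![w 1, w 0]
              simp only [Matrix.cons_val_zero, Matrix.cons_val_one, Matrix.head_cons] at hsw
              by_cases hz : f₀ ![w 1, w 0] = 0
              · rw [if_pos hz]
                have hfalse : ¬ (P * w 1 < Q * w 0 + (1 - c)) := by
                  rw [← hsw]; omega
                generalize Q * w 0 = A at hfalse ⊢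
                generalize P * w 1 = B at hfalse ⊢
                constructor
                · intro _; omega
                · intro _; omega
              · rw [if_neg hz]
                have h1 : P * w 1 < Q * w 0 + (1 - c) := hsw.mp (Nat.pos_of_ne_zero hz)
                generalize Q * w 0 = A at h1 ⊢
                generalize P * w 1 = B at h1 ⊢
                constructor
                · intro hh; omega
                · intro hh; omega

end AuxRep

/-- For a decent class `O` and any rational `a`, there is an `O`-representable
function `lt_a` with `lt_a(x,y,z) > 0` iff `(x - y)/(z + 1) < a`. -/
theorem decent_exists_lt (O : OpClass) (hO : Decent O) (a : ℚ) :
    ∃ lt : (Fin 3 → ℕ) → ℕ, Representable O 3 lt ∧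
      ∀ x y z : ℕ, 0 < lt ![x, y, z] ↔ ((x : ℚ) - (y : ℚ)) / ((z : ℚ) + 1) < a := by
  have hden : (0:ℚ) < (a.den:ℚ) := by exact_mod_cast a.pos
  have hdenZ : (0:ℤ) < (a.den:ℤ) := by exact_mod_cast a.pos
  have hnum_eq : (a.num:ℚ) = a * (a.den:ℚ) := by
    have h := Rat.num_div_den a
    rw [div_eq_iff (ne_of_gt hden)] at h
    exact h
  have basic : ∀ x y z : ℕ, (((x:ℚ) - y) / ((z:ℚ)+1) < a ↔
      ((x:ℤ) - y) * a.den < a.num * ((z:ℤ)+1)) := by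
    intro x y z
    rw [div_lt_iff₀ (by positivity)]
    have hcast : (((x:ℤ) - y) * a.den < a.num * ((z:ℤ)+1)) ↔
        (((x:ℚ) - y) * (a.den:ℚ) < (a.num:ℚ) * ((z:ℚ)+1)) := by
      constructor <;> intro h <;> exact_mod_cast h
    rw [hcast, hnum_eq]
    constructor <;> intro h <;> nlinarith [hden]
  rcases le_or_gt 0 a.num with hnum | hnum
  · -- a ≥ 0
    obtain ⟨g, hgrep, hg⟩ := euclid hO (a.num.toNat + a.den) a.num.toNat a.den 0 le_rfl (by omega)
    refine ⟨fun w => if w 1 - w 0 = 0 then g ![w 0 - w 1, w 2 + 1] else (w 0 - w 0) + 1,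
      ?_, ?_⟩
    · refine rep_ite hO (rep_sub hO (rep_var hO.appropriate 1) (rep_var hO.appropriate 0))
        ?_ (rep_succ hO (rep_sub hO (rep_var hO.appropriate 0) (rep_var hO.appropriate 0)))
      refine rep_congr (fun v => ?_)
        (rep_comp' hO.appropriate
          (g := ![fun w => w 0 - w 1, fun w => w 2 + 1]) hgrep (fun i => by
            fin_cases i
            · simpa using rep_sub hO (rep_var hO.appropriate 0) (rep_var hO.appropriate 1)
            · simpa using rep_succ hO (rep_var hO.appropriate 2)))
      refine congrArg g ?_
      funext i
      fin_cases i <;> simp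
    · intro x y z
      rw [basic x y z]
      have hgx := hg ![x - y, z + 1]
      simp only [Matrix.cons_val_zero, Matrix.cons_val_one, Matrix.head_cons] at hgx
      simp only [Matrix.cons_val_zero, Matrix.cons_val_one, Matrix.head_cons,
        Matrix.cons_val_two, Matrix.tail_cons]
      by_cases hxy : y ≤ x
      · rw [if_pos (Nat.sub_eq_zero_of_le hxy), hgx]
        rw [Nat.add_zero]
        zify [hxy]
        rw [Int.toNat_of_nonneg hnum]
        constructor <;> intro h <;> nlinarith
      · rw [if_neg (by omega)]
        have hlt : ((x:ℤ) - y) * a.den < a.num * ((z:ℤ)+1) := by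
          have hxy' : (x:ℤ) < y := by exact_mod_cast Nat.lt_of_not_le hxy
          have hz : (0:ℤ) ≤ (z:ℤ) := Int.ofNat_nonneg z
          nlinarith
        simp [hlt]
  · -- a < 0
    obtain ⟨g, hgrep, hg⟩ := euclid hO (a.den + (-a.num).toNat) a.den (-a.num).toNat 0
      le_rfl (by omega)
    refine ⟨fun w => g ![w 2 + 1, w 1 - w 0], ?_, ?_⟩
    · refine rep_congr (fun v => ?_)
        (rep_comp' hO.appropriate
          (g := ![fun w => w 2 + 1, fun w => w 1 - w 0]) hgrep (fun i => by
            fin_cases i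
            · simpa using rep_succ hO (rep_var hO.appropriate 2)
            · simpa using rep_sub hO (rep_var hO.appropriate 1) (rep_var hO.appropriate 0)))
      refine congrArg g ?_
      funext i
      fin_cases i <;> simp
    · intro x y z
      rw [basic x y z]
      have hgx := hg ![z + 1, y - x]
      simp only [Matrix.cons_val_zero, Matrix.cons_val_one, Matrix.head_cons] at hgx
      simp only [Matrix.cons_val_zero, Matrix.cons_val_one, Matrix.head_cons,
        Matrix.cons_val_two, Matrix.tail_cons]
      rw [hgx, Nat.add_zero]
      have hPnn : (0:ℤ) ≤ -a.num := by omega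
      by_cases hxy : x < y
      · zify [Nat.le_of_lt hxy]
        rw [Int.toNat_of_nonneg hPnn]
        constructor <;> intro h <;> nlinarith
      · have hy : y - x = 0 := by omega
        rw [hy]
        have hrhs : ¬ (((x:ℤ) - y) * a.den < a.num * ((z:ℤ)+1)) := by
          have hxy' : (y:ℤ) ≤ x := by exact_mod_cast Nat.le_of_not_lt hxy
          have hz : (0:ℤ) ≤ (z:ℤ) := Int.ofNat_nonneg z
          push_neg
          nlinarith
        simp [hrhs]
end

section
/- Let O be a decent class of operators. Then every locally uniformly O-computable real function θ : D → ℝ with compact domain D ⊆ ℝ^N is uniformly O-computable. -/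
section Toolkit

variable {O : OpClass} (hO : Decent O)
include hO

lemma mem_id (k : ℕ) : (fun (_ : Fin k → ℕ → ℕ) (n : ℕ) => n) ∈ O k := by
  have h := hO.appropriate.diag k (fun fs => fs (Fin.last k))
    (hO.appropriate.proj _ _)
  have e : (fun (fs : Fin k → ℕ → ℕ) (n : ℕ) =>
      (Fin.snoc fs (fun _ => n) : Fin (k+1) → ℕ → ℕ) (Fin.last k) n)
      = fun _ n => n := by
    funext fs n; rw [Fin.snoc_last]
  rwa [e] at h

lemma mem_succ {k : ℕ} {A : Op k} (hA : A ∈ O k) :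
    (fun fs n => A fs n + 1) ∈ O k :=
  hO.appropriate.subst 1 k _ (fun _ => A) hO.succ (fun _ => hA)

lemma mem_tsub {k : ℕ} {A B : Op k} (hA : A ∈ O k) (hB : B ∈ O k) :
    (fun fs n => A fs n - B fs n) ∈ O k := by
  have h := hO.appropriate.subst 2 k _ ![A, B] hO.tsub
    (fun i => by fin_cases i <;> simpa)
  have e : (fun gs => (fun (fs : Fin 2 → ℕ → ℕ) n => (fun v => v 0 - v 1) (fun i => fs i n)) (fun i => ![A, B] i gs))
      = fun fs n => A fs n - B fs n := by
    funext gs n; simp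
  rwa [e] at h

lemma mem_delta {k : ℕ} {A B C : Op k} (hA : A ∈ O k) (hB : B ∈ O k) (hC : C ∈ O k) :
    (fun fs n => if A fs n = 0 then B fs n else C fs n) ∈ O k := by
  have h := hO.appropriate.subst 3 k _ ![A, B, C] hO.delta1
    (fun i => by fin_cases i <;> simpa)
  have e : (fun gs => (fun (fs : Fin 3 → ℕ → ℕ) n => (fun v => if v 0 = 0 then v 1 else v 2) (fun i => fs i n)) (fun i => ![A, B, C] i gs))
      = fun fs n => if A fs n = 0 then B fs n else C fs n := by
    funext gs n; rfl
  rwa [e] at h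

lemma mem_comp {k : ℕ} {A B : Op k} (hA : A ∈ O k) (hB : B ∈ O k) :
    (fun fs n => A fs (B fs n)) ∈ O k := by
  have h := hO.appropriate.subst 2 k _ ![A, B] hO.appropriate.comp
    (fun i => by fin_cases i <;> simpa)
  have e : (fun gs => (fun (fs : Fin 2 → ℕ → ℕ) n => fs 0 (fs 1 n)) (fun i => ![A, B] i gs))
      = fun fs n => A fs (B fs n) := by
    funext gs n; simp
  rwa [e] at h

lemma mem_const (k c : ℕ) : (fun (_ : Fin k → ℕ → ℕ) (_ : ℕ) => c) ∈ O k := by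
  induction c with
  | zero =>
    have h := mem_tsub hO (mem_id hO k) (mem_id hO k)
    have e : (fun (fs : Fin k → ℕ → ℕ) (n : ℕ) => n - n) = fun _ _ => (0:ℕ) := by
      funext fs n; simp
    rwa [e] at h
  | succ c ih => exact mem_succ hO ih

lemma mem_evalConst {k : ℕ} (i : Fin k) (s : ℕ) :
    (fun (fs : Fin k → ℕ → ℕ) (_ : ℕ) => fs i s) ∈ O k :=
  mem_comp hO (hO.appropriate.proj k i) (mem_const hO k s)

end Toolkit
def lecmp (q p u w : ℕ) : ℕ := if q * u ≤ p * w then 0 else 1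

lemma lecmp_eq_zero {q p u w : ℕ} : lecmp q p u w = 0 ↔ q * u ≤ p * w := by
  unfold lecmp; split <;> simp [*]

section Cmp

variable {O : OpClass} (hO : Decent O)
include hO

lemma mem_lecmp_aux : ∀ m q p, q + p ≤ m → 1 ≤ q → 1 ≤ p →
    ∀ (k : ℕ) (A B : Op k), A ∈ O k → B ∈ O k →
    (fun fs n => lecmp q p (A fs n) (B fs n)) ∈ O k := by
  intro m
  induction m with
  | zero => intro q p h hq hp; omega
  | succ m ih =>
    intro q p h hq hp k A B hA hB
    rcases lt_trichotomy q p with hlt | heq | hgt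
    · -- q < p
      have hrec := ih q (p - q) (by omega) hq (by omega) k
        (fun fs n => A fs n - B fs n) B (mem_tsub hO hA hB) hB
      have h2 := mem_delta hO (mem_tsub hO hA hB) (mem_const hO k 0) hrec
      have e : (fun (fs : Fin k → ℕ → ℕ) (n : ℕ) =>
          if A fs n - B fs n = 0 then (fun (_ : Fin k → ℕ → ℕ) (_ : ℕ) => 0) fs n
          else (fun (fs : Fin k → ℕ → ℕ) (n : ℕ) =>
            lecmp q (p - q) ((fun fs n => A fs n - B fs n) fs n) (B fs n)) fs n)
          = fun fs n => lecmp q p (A fs n) (B fs n) := by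
        funext fs n
        simp only []
        generalize A fs n = u
        generalize B fs n = w
        by_cases hu : u ≤ w
        · have h0 : u - w = 0 := by omega
          have hle : q * u ≤ p * w :=
            le_trans (Nat.mul_le_mul (le_of_lt hlt) hu) le_rfl
          simp [h0, lecmp, hle]
        · have h0 : ¬ (u - w = 0) := by omega
          have hw : w ≤ u := by omega
          have e1 : q * (u - w) + q * w = q * u := by
            rw [← Nat.mul_add, Nat.sub_add_cancel hw]
          have e2 : (p - q) * w + q * w = p * w := by
            rw [← Nat.add_mul, Nat.sub_add_cancel (le_of_lt hlt)]
          have hiff : q * (u - w) ≤ (p - q) * w ↔ q * u ≤ p * w := by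
            constructor <;> intro hh <;> linarith
          simp only [h0, if_false, lecmp, hiff]
      rwa [e] at h2
    · -- q = p
      subst heq
      have h2 := mem_delta hO (mem_tsub hO hA hB) (mem_const hO k 0) (mem_const hO k 1)
      have e : (fun (fs : Fin k → ℕ → ℕ) (n : ℕ) =>
          if A fs n - B fs n = 0 then (fun (_ : Fin k → ℕ → ℕ) (_ : ℕ) => 0) fs n
          else (fun (_ : Fin k → ℕ → ℕ) (_ : ℕ) => 1) fs n)
          = fun fs n => lecmp q q (A fs n) (B fs n) := by
        funext fs n
        simp only []
        generalize A fs n = u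
        generalize B fs n = w
        have hiff : q * u ≤ q * w ↔ u ≤ w := by
          constructor
          · intro hh; by_contra hc; push_neg at hc; nlinarith
          · intro hh; exact Nat.mul_le_mul_left q hh
        by_cases hu : u ≤ w
        · have h0 : u - w = 0 := by omega
          simp [h0, lecmp, hiff, hu]
        · have h0 : ¬ (u - w = 0) := by omega
          simp [h0, lecmp, hiff, hu]
      rwa [e] at h2
    · -- q > p
      have hrec := ih (q - p) p (by omega) (by omega) hp k
        A (fun fs n => B fs n - A fs n) hA (mem_tsub hO hB hA)
      have e : (fun (fs : Fin k → ℕ → ℕ) (n : ℕ) =>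
          lecmp (q - p) p (A fs n) ((fun fs n => B fs n - A fs n) fs n))
          = fun fs n => lecmp q p (A fs n) (B fs n) := by
        funext fs n
        simp only []
        generalize A fs n = u
        generalize B fs n = w
        by_cases hu : u ≤ w
        · have e1 : p * (w - u) + p * u = p * w := by
            rw [← Nat.mul_add, Nat.sub_add_cancel hu]
          have e2 : (q - p) * u + p * u = q * u := by
            rw [← Nat.add_mul, Nat.sub_add_cancel (le_of_lt hgt)]
          have hiff : (q - p) * u ≤ p * (w - u) ↔ q * u ≤ p * w := by
            constructor <;> intro hh <;> linarith
          simp only [lecmp, hiff]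
        · push_neg at hu
          have h1 : ¬ (q * u ≤ p * w) := by
            intro hh
            nlinarith
          have hw0 : w - u = 0 := by omega
          have h2 : ¬ ((q - p) * u ≤ p * (w - u)) := by
            rw [hw0]
            simp only [Nat.mul_zero]
            intro hh
            have hu0 : (q - p) * u = 0 := by omega
            rcases Nat.mul_eq_zero.mp hu0 with h | h
            · omega
            · omega
          simp only [lecmp, if_neg h1, if_neg h2]
      rwa [e] at hrec

lemma mem_lecmp {q p : ℕ} (hq : 1 ≤ q) (hp : 1 ≤ p) {k : ℕ} {A B : Op k}
    (hA : A ∈ O k) (hB : B ∈ O k) :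
    (fun fs n => lecmp q p (A fs n) (B fs n)) ∈ O k :=
  mem_lecmp_aux hO (q + p) q p le_rfl hq hp k A B hA hB

end Cmp
def natTestLE (a : ℤ) (b : ℕ) (u v w : ℕ) : ℕ :=
  if (b:ℤ) * ((u:ℤ) - (v:ℤ)) ≤ a * ((w:ℤ) + 1) then 0 else 1

lemma natTestLE_eq_zero {a : ℤ} {b u v w : ℕ} :
    natTestLE a b u v w = 0 ↔ (b:ℤ) * ((u:ℤ) - (v:ℤ)) ≤ a * ((w:ℤ) + 1) := by
  unfold natTestLE; split <;> simp [*]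

section TestLE

variable {O : OpClass} (hO : Decent O)
include hO

lemma mem_natTestLE (a : ℤ) {b : ℕ} (hb : 1 ≤ b) {k : ℕ} {A B C : Op k}
    (hA : A ∈ O k) (hB : B ∈ O k) (hC : C ∈ O k) :
    (fun fs n => natTestLE a b (A fs n) (B fs n) (C fs n)) ∈ O k := by
  rcases lt_trichotomy a 0 with ha | ha | ha
  · -- a < 0
    have hp : 1 ≤ (-a).toNat := by omega
    have hrec := mem_lecmp hO hp hb (mem_succ hO hC) (mem_tsub hO hB hA)
    have h2 := mem_delta hO (mem_tsub hO hB hA) (mem_const hO k 1) hrec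
    have e : (fun (fs : Fin k → ℕ → ℕ) (n : ℕ) =>
        if B fs n - A fs n = 0 then (fun (_ : Fin k → ℕ → ℕ) (_ : ℕ) => 1) fs n
        else (fun (fs : Fin k → ℕ → ℕ) n =>
          lecmp (-a).toNat b ((fun fs n => C fs n + 1) fs n)
            ((fun fs n => B fs n - A fs n) fs n)) fs n)
        = fun fs n => natTestLE a b (A fs n) (B fs n) (C fs n) := by
      funext fs n
      simp only []
      generalize A fs n = u
      generalize B fs n = v
      generalize C fs n = w
      by_cases huv : v ≤ u
      · have h0 : v - u = 0 := by omega
        have h1 : (0:ℤ) ≤ (u:ℤ) - v := by omega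
        have h2 : (0:ℤ) ≤ (b:ℤ) * ((u:ℤ) - v) := mul_nonneg (by positivity) h1
        have h3 : a * ((w:ℤ) + 1) < 0 :=
          mul_neg_of_neg_of_pos ha (by positivity)
        have h4 : ¬ ((b:ℤ) * ((u:ℤ) - (v:ℤ)) ≤ a * ((w:ℤ) + 1)) := by linarith
        simp [h0, natTestLE, h4]
      · push_neg at huv
        have hcast : ((v - u : ℕ) : ℤ) = (v:ℤ) - u := by omega
        have hp' : ((-a).toNat : ℤ) = -a := by omega
        have hiff : (((-a).toNat) * (w + 1) ≤ b * (v - u))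
            ↔ ((b:ℤ) * ((u:ℤ) - (v:ℤ)) ≤ a * ((w:ℤ) + 1)) := by
          rw [show ((b:ℤ) * ((u:ℤ) - (v:ℤ))) = -((b:ℤ) * ((v:ℤ) - u)) by ring]
          constructor
          · intro h
            have h' : ((-a).toNat : ℤ) * ((w:ℤ) + 1) ≤ (b:ℤ) * (((v - u : ℕ)):ℤ) := by
              exact_mod_cast h
            rw [hp', hcast] at h'
            linarith
          · intro h
            have h' : ((-a).toNat:ℤ) * ((w:ℤ) + 1) ≤ (b:ℤ) * (((v - u : ℕ)):ℤ) := by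
              rw [hp', hcast]; linarith
            exact_mod_cast h'
        have h0 : ¬ (v - u = 0) := by omega
        simp only [h0, if_false, lecmp, natTestLE]
        rw [if_congr hiff rfl rfl]
    rwa [e] at h2
  · -- a = 0
    subst ha
    have h2 := mem_delta hO (mem_tsub hO hA hB) (mem_const hO k 0) (mem_const hO k 1)
    have e : (fun (fs : Fin k → ℕ → ℕ) (n : ℕ) =>
        if A fs n - B fs n = 0 then (fun (_ : Fin k → ℕ → ℕ) (_ : ℕ) => 0) fs n
        else (fun (_ : Fin k → ℕ → ℕ) (_ : ℕ) => 1) fs n)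
        = fun fs n => natTestLE 0 b (A fs n) (B fs n) (C fs n) := by
      funext fs n
      simp only []
      generalize A fs n = u
      generalize B fs n = v
      generalize C fs n = w
      have hiff : (u - v = 0) ↔ ((b:ℤ) * ((u:ℤ) - (v:ℤ)) ≤ 0 * ((w:ℤ) + 1)) := by
        rw [zero_mul]
        constructor
        · intro h
          have h1 : (u:ℤ) - v ≤ 0 := by omega
          exact mul_nonpos_of_nonneg_of_nonpos (by positivity) h1
        · intro h
          have hb' : (0:ℤ) < (b:ℤ) := by exact_mod_cast hb
          have h1 : (u:ℤ) - v ≤ 0 := by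
            by_contra hc
            push_neg at hc
            nlinarith
          omega
      simp only [natTestLE]
      rw [if_congr hiff rfl rfl]
    rwa [e] at h2
  · -- a > 0
    have hp : 1 ≤ a.toNat := by omega
    have hrec := mem_lecmp hO hb hp (mem_tsub hO hA hB) (mem_succ hO hC)
    have h2 := mem_delta hO (mem_tsub hO hA hB) (mem_const hO k 0) hrec
    have e : (fun (fs : Fin k → ℕ → ℕ) (n : ℕ) =>
        if A fs n - B fs n = 0 then (fun (_ : Fin k → ℕ → ℕ) (_ : ℕ) => 0) fs n
        else (fun (fs : Fin k → ℕ → ℕ) n =>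
          lecmp b a.toNat ((fun fs n => A fs n - B fs n) fs n)
            ((fun fs n => C fs n + 1) fs n)) fs n)
        = fun fs n => natTestLE a b (A fs n) (B fs n) (C fs n) := by
      funext fs n
      simp only []
      generalize A fs n = u
      generalize B fs n = v
      generalize C fs n = w
      by_cases huv : u ≤ v
      · have h0 : u - v = 0 := by omega
        have h1 : (u:ℤ) - v ≤ 0 := by omega
        have h2 : (b:ℤ) * ((u:ℤ) - v) ≤ 0 :=
          mul_nonpos_of_nonneg_of_nonpos (by positivity) h1
        have h3 : 0 ≤ a * ((w:ℤ) + 1) := by positivity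
        simp [h0, natTestLE, le_trans h2 h3]
      · push_neg at huv
        have hcast : ((u - v : ℕ) : ℤ) = (u:ℤ) - v := by omega
        have hp' : (a.toNat : ℤ) = a := by omega
        have hiff : (b * (u - v) ≤ a.toNat * (w + 1))
            ↔ ((b:ℤ) * ((u:ℤ) - (v:ℤ)) ≤ a * ((w:ℤ) + 1)) := by
          constructor
          · intro h
            have h' : (b:ℤ) * (((u - v : ℕ)):ℤ) ≤ (a.toNat:ℤ) * ((w:ℤ) + 1) := by
              exact_mod_cast h
            rw [hp', hcast] at h'
            linarith
          · intro h
            have h' : (b:ℤ) * (((u - v : ℕ)):ℤ) ≤ (a.toNat:ℤ) * ((w:ℤ) + 1) := by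
              rw [hp', hcast]; linarith
            exact_mod_cast h'
        have h0 : ¬ (u - v = 0) := by omega
        simp only [h0, if_false, lecmp, natTestLE]
        rw [if_congr hiff rfl rfl]
    rwa [e] at h2

end TestLE

lemma natTestLE_zero_iff (q : ℚ) (u v w : ℕ) :
    natTestLE q.num q.den u v w = 0 ↔ ((u:ℝ) - (v:ℝ)) / ((w:ℝ) + 1) ≤ (q:ℝ) := by
  rw [natTestLE_eq_zero, Rat.cast_def,
    div_le_div_iff₀ (by positivity : (0:ℝ) < (w:ℝ)+1)
      (by exact_mod_cast q.den_pos : (0:ℝ) < (q.den:ℝ)),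
    mul_comm ((u:ℝ) - (v:ℝ)) ((q.den:ℝ))]
  constructor <;> intro h <;> exact_mod_cast h
lemma natTestGE_zero_iff (q : ℚ) (u v w : ℕ) :
    natTestLE (-q).num (-q).den v u w = 0 ↔ (q:ℝ) ≤ ((u:ℝ) - (v:ℝ)) / ((w:ℝ) + 1) := by
  rw [natTestLE_zero_iff,
    show ((v:ℝ) - (u:ℝ)) / ((w:ℝ) + 1) = -(((u:ℝ) - (v:ℝ)) / ((w:ℝ) + 1)) from by ring,
    Rat.cast_neg, neg_le_neg_iff]

/-- Specification of a single "piece" used in the gluing argument. -/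
def PieceSpec (O : OpClass) (N : ℕ) (D : Set (Fin N → ℝ)) (θ : (Fin N → ℝ) → ℝ)
    (p : (Fin N → ℚ) × ℚ) : Prop :=
  ∃ (E F G H : Op (3 * N)) (Pass : (Fin (3 * N) → ℕ → ℕ) → Prop),
    E ∈ O (3 * N) ∧ F ∈ O (3 * N) ∧ G ∈ O (3 * N) ∧ H ∈ O (3 * N) ∧
    (∀ fs n, E fs n = 0 ↔ Pass fs) ∧
    (∀ ξ ∈ D, ∀ fs, NamesTuple N fs ξ →
      (Pass fs → Names (F fs) (G fs) (H fs) (θ ξ)) ∧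
      ((∀ i, |ξ i - (p.1 i : ℝ)| < (p.2 : ℝ)) → Pass fs))

section Glue

variable {O : OpClass} (hO : Decent O)
include hO

lemma mem_andList {k : ℕ} {ι : Type*} (T : ι → Op k) :
    ∀ L : List ι, (∀ i ∈ L, T i ∈ O k) →
    ∃ E ∈ O k, ∀ fs n, (E fs n = 0 ↔ ∀ i ∈ L, T i fs n = 0) := by
  intro L
  induction L with
  | nil => intro _; exact ⟨_, mem_const hO k 0, by simp⟩
  | cons i L ih =>
    intro hT
    obtain ⟨E, hE, hsem⟩ := ih (fun j hj => hT j (List.mem_cons_of_mem _ hj))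
    refine ⟨fun fs n => if T i fs n = 0 then E fs n else 1,
      mem_delta hO (hT i List.mem_cons_self) hE (mem_const hO k 1), ?_⟩
    intro fs n
    by_cases h : T i fs n = 0 <;>
      simp [h, hsem fs n, List.forall_mem_cons]

lemma glue {N : ℕ} {D : Set (Fin N → ℝ)} {θ : (Fin N → ℝ) → ℝ} :
    ∀ L : List ((Fin N → ℚ) × ℚ), (∀ p ∈ L, PieceSpec O N D θ p) →
    ∃ F G H : Op (3 * N), F ∈ O (3 * N) ∧ G ∈ O (3 * N) ∧ H ∈ O (3 * N) ∧
      ∀ ξ ∈ D, (∃ p ∈ L, ∀ i, |ξ i - (p.1 i : ℝ)| < (p.2 : ℝ)) →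
        ∀ fs, NamesTuple N fs ξ → Names (F fs) (G fs) (H fs) (θ ξ) := by
  intro L
  induction L with
  | nil =>
    intro _
    exact ⟨_, _, _, mem_id hO _, mem_id hO _, mem_id hO _, by simp⟩
  | cons p L ih =>
    intro hL
    obtain ⟨F1, G1, H1, hF1, hG1, hH1, hsem1⟩ :=
      ih (fun q hq => hL q (List.mem_cons_of_mem _ hq))
    obtain ⟨E, F0, G0, H0, Pass, hE, hF0, hG0, hH0, hEsem, hspec⟩ :=
      hL p List.mem_cons_self
    refine ⟨fun fs n => if E fs n = 0 then F0 fs n else F1 fs n,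
            fun fs n => if E fs n = 0 then G0 fs n else G1 fs n,
            fun fs n => if E fs n = 0 then H0 fs n else H1 fs n,
            mem_delta hO hE hF0 hF1, mem_delta hO hE hG0 hG1,
            mem_delta hO hE hH0 hH1, ?_⟩
    intro ξ hξ hcover fs hfs
    by_cases hpass : Pass fs
    · have hnames := (hspec ξ hξ fs hfs).1 hpass
      intro t
      have h0 : E fs t = 0 := (hEsem fs t).mpr hpass
      simpa [h0] using hnames t
    · have hnot : ∀ n, ¬ (E fs n = 0) := fun n h => hpass ((hEsem fs n).mp h)
      have hcover' : ∃ q ∈ L, ∀ i, |ξ i - (q.1 i : ℝ)| < (q.2 : ℝ) := by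
        obtain ⟨q, hq, hqball⟩ := hcover
        rcases List.mem_cons.mp hq with rfl | hq'
        · exact absurd ((hspec ξ hξ fs hfs).2 hqball) hpass
        · exact ⟨q, hq', hqball⟩
      have hnames := hsem1 ξ hξ hcover' fs hfs
      intro t
      simpa [hnot t] using hnames t

lemma pieceSpec_of_unifComp {N : ℕ} {D : Set (Fin N → ℝ)} {θ : (Fin N → ℝ) → ℝ}
    (c : Fin N → ℚ) (r : ℚ) (hr : 0 < r)
    (hU : UnifComp O N (D ∩ {ξ | ∀ i, |ξ i - (c i : ℝ)| < 3 * (r : ℝ)}) θ) :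
    PieceSpec O N D θ (c, r) := by
  obtain ⟨F, G, H, hF, hG, hH, hFGH⟩ := hU
  have hrpos : (0:ℝ) < (r:ℝ) := by exact_mod_cast hr
  set s : ℕ := ⌈(2 / r : ℚ)⌉₊ with hsdef
  have hsr : 1 / ((s:ℝ) + 1) ≤ (r:ℝ) / 2 := by
    have h1 : (2 / r : ℚ) ≤ (s : ℚ) := Nat.le_ceil _
    have h2 : (2 / (r:ℝ)) ≤ (s:ℝ) := by exact_mod_cast h1
    have h3 : (2:ℝ) ≤ (r:ℝ) * ((s:ℝ) + 1) := by
      have := (div_le_iff₀ hrpos).mp h2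
      nlinarith
    rw [div_le_div_iff₀ (by positivity) (by norm_num : (0:ℝ) < 2)]
    nlinarith
  -- index helpers
  have hidx0 : ∀ i : Fin N, 3 * i.val < 3 * N := by intro i; have := i.isLt; omega
  have hidx1 : ∀ i : Fin N, 3 * i.val + 1 < 3 * N := by intro i; have := i.isLt; omega
  have hidx2 : ∀ i : Fin N, 3 * i.val + 2 < 3 * N := by intro i; have := i.isLt; omega
  -- per-coordinate tests
  set T : Fin N → Op (3 * N) := fun i fs _ =>
    if natTestLE (c i + 2 * r).num (c i + 2 * r).den
        (fs ⟨3 * i.val, hidx0 i⟩ s) (fs ⟨3 * i.val + 1, hidx1 i⟩ s)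
        (fs ⟨3 * i.val + 2, hidx2 i⟩ s) = 0
    then natTestLE (-(c i - 2 * r)).num (-(c i - 2 * r)).den
        (fs ⟨3 * i.val + 1, hidx1 i⟩ s) (fs ⟨3 * i.val, hidx0 i⟩ s)
        (fs ⟨3 * i.val + 2, hidx2 i⟩ s)
    else 1 with hTdef
  have hTmem : ∀ i, T i ∈ O (3 * N) := by
    intro i
    exact mem_delta hO
      (mem_natTestLE hO _ (c i + 2 * r).den_pos
        (mem_evalConst hO _ s) (mem_evalConst hO _ s) (mem_evalConst hO _ s))
      (mem_natTestLE hO _ (-(c i - 2 * r)).den_pos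
        (mem_evalConst hO _ s) (mem_evalConst hO _ s) (mem_evalConst hO _ s))
      (mem_const hO _ 1)
  obtain ⟨E, hE, hEsem⟩ := mem_andList hO T (List.finRange N) (fun i _ => hTmem i)
  refine ⟨E, F, G, H, fun fs => ∀ i : Fin N, T i fs 0 = 0,
    hE, hF, hG, hH, ?_, ?_⟩
  · intro fs n
    rw [hEsem fs n]
    constructor
    · intro h i; exact h i (List.mem_finRange i)
    · intro h i _; exact h i
  · intro ξ hξ fs hfs
    -- basic approximation facts
    have hα : ∀ i : Fin N,
        |((fs ⟨3 * i.val, hidx0 i⟩ s : ℝ) - (fs ⟨3 * i.val + 1, hidx1 i⟩ s : ℝ)) /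
          ((fs ⟨3 * i.val + 2, hidx2 i⟩ s : ℝ) + 1) - ξ i| < (r:ℝ) / 2 := by
      intro i
      have := hfs i s
      exact lt_of_lt_of_le this hsr
    constructor
    · -- Pass → Names
      intro hpass
      have hball : ∀ i : Fin N, |ξ i - (c i : ℝ)| < 3 * (r:ℝ) := by
        intro i
        have ht := hpass i
        rw [hTdef] at ht
        simp only [] at ht
        by_cases hhi : natTestLE (c i + 2 * r).num (c i + 2 * r).den
            (fs ⟨3 * i.val, hidx0 i⟩ s) (fs ⟨3 * i.val + 1, hidx1 i⟩ s)
            (fs ⟨3 * i.val + 2, hidx2 i⟩ s) = 0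
        · rw [if_pos hhi] at ht
          have h1 := (natTestLE_zero_iff (c i + 2 * r) _ _ _).mp hhi
          have h2 := (natTestGE_zero_iff (c i - 2 * r) _ _ _).mp ht
          have h3 := hα i
          rw [abs_lt] at h3 ⊢
          push_cast at h1 h2
          constructor <;> linarith [h3.1, h3.2, h1, h2]
        · rw [if_neg hhi] at ht; exact absurd ht one_ne_zero
      exact hFGH ξ ⟨hξ, hball⟩ fs hfs
    · -- small ball → Pass
      intro hball i
      rw [hTdef]
      simp only []
      have h3 := hα i
      have hb := hball i
      rw [abs_lt] at h3 hb
      have hhi : natTestLE (c i + 2 * r).num (c i + 2 * r).den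
          (fs ⟨3 * i.val, hidx0 i⟩ s) (fs ⟨3 * i.val + 1, hidx1 i⟩ s)
          (fs ⟨3 * i.val + 2, hidx2 i⟩ s) = 0 := by
        rw [natTestLE_zero_iff]
        push_cast
        linarith [h3.1, h3.2, hb.1, hb.2]
      rw [if_pos hhi, natTestGE_zero_iff]
      push_cast
      linarith [h3.1, h3.2, hb.1, hb.2]

end Glue
/-- For a decent class `O`, every locally uniformly `O`-computable real
function with compact domain is uniformly `O`-computable. -/
theorem locallyUnifComp_compact_unifComp (O : OpClass) (hO : Decent O)
    (N : ℕ) (D : Set (Fin N → ℝ)) (hD : IsCompact D)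
    (θ : (Fin N → ℝ) → ℝ)
    (hloc : ∀ ξ ∈ D, ∃ U ∈ nhds ξ, UnifComp O N (D ∩ U) θ) :
    UnifComp O N D θ := by
  classical
  have hpt : ∀ x : D, ∃ (c : Fin N → ℚ) (r : ℚ), 0 < r ∧
      (∀ i, |(x : Fin N → ℝ) i - (c i : ℝ)| < (r : ℝ)) ∧
      UnifComp O N (D ∩ {ξ | ∀ i, |ξ i - (c i : ℝ)| < 3 * (r : ℝ)}) θ := by
    rintro ⟨x, hx⟩
    obtain ⟨U, hU, hcomp⟩ := hloc x hx
    obtain ⟨ε, hε, hball⟩ := Metric.mem_nhds_iff.mp hU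
    obtain ⟨r, hr0, hr1⟩ := exists_rat_btwn (show (0:ℝ) < ε / 5 by linarith)
    have hrpos : 0 < r := by exact_mod_cast hr0
    have hc : ∀ i : Fin N, ∃ ci : ℚ, |x i - (ci : ℝ)| < (r : ℝ) := by
      intro i
      have hrpos' : (0:ℝ) < (r:ℝ) := by exact_mod_cast hrpos
      obtain ⟨ci, h1, h2⟩ := exists_rat_btwn (show x i - (r:ℝ) < x i by linarith)
      exact ⟨ci, by rw [abs_sub_lt_iff]; constructor <;> linarith⟩
    choose cc hcc using hc
    refine ⟨cc, r, hrpos, hcc, ?_⟩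
    obtain ⟨F, G, H, hF, hG, hH, hsem⟩ := hcomp
    refine ⟨F, G, H, hF, hG, hH, ?_⟩
    intro ξ hξ fs hfs
    refine hsem ξ ⟨hξ.1, hball ?_⟩ fs hfs
    have hd : dist ξ x < ε := by
      rw [dist_pi_lt_iff hε]
      intro i
      rw [Real.dist_eq]
      have h1 := hξ.2 i
      have h2 := hcc i
      rw [abs_sub_lt_iff] at h1 h2 ⊢
      constructor <;> linarith [h1.1, h1.2, h2.1, h2.2, hr1]
    exact Metric.mem_ball.mpr hd
  choose cc rr hrpos hmem hcmp using hpt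
  have hopen : ∀ x : D,
      IsOpen {ξ : Fin N → ℝ | ∀ i, |ξ i - (cc x i : ℝ)| < (rr x : ℝ)} := by
    intro x
    have he : {ξ : Fin N → ℝ | ∀ i, |ξ i - (cc x i : ℝ)| < (rr x : ℝ)}
        = Metric.ball (fun i => (cc x i : ℝ)) (rr x : ℝ) := by
      ext ξ
      rw [Set.mem_setOf_eq, Metric.mem_ball,
        dist_pi_lt_iff (by exact_mod_cast hrpos x : (0:ℝ) < (rr x : ℝ))]
      simp only [Real.dist_eq]
    rw [he]
    exact Metric.isOpen_ball
  have hcov : D ⊆ ⋃ x : D,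
      {ξ : Fin N → ℝ | ∀ i, |ξ i - (cc x i : ℝ)| < (rr x : ℝ)} := by
    intro ξ hξ
    exact Set.mem_iUnion.mpr ⟨⟨ξ, hξ⟩, hmem ⟨ξ, hξ⟩⟩
  obtain ⟨t, ht⟩ := hD.elim_finite_subcover _ hopen hcov
  obtain ⟨F, G, H, hF, hG, hH, hsem⟩ := glue hO
    (t.toList.map (fun x => (cc x, rr x)))
    (by
      intro p hp
      obtain ⟨x, hxt, rfl⟩ := List.mem_map.mp hp
      exact pieceSpec_of_unifComp hO (cc x) (rr x) (hrpos x) (hcmp x))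
  refine ⟨F, G, H, hF, hG, hH, ?_⟩
  intro ξ hξ fs hfs
  refine hsem ξ hξ ?_ fs hfs
  have hmem2 := ht hξ
  rw [Set.mem_iUnion₂] at hmem2
  obtain ⟨x, hxt, hxU⟩ := hmem2
  exact ⟨(cc x, rr x), List.mem_map.mpr ⟨x, Finset.mem_toList.mpr hxt, rfl⟩, hxU⟩
end
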